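/- The collection E := {Y ⊆ κ : there exists A ∈ D such that S_A ⊆ Y} is a κ-complete nonprincipal ultrafilter on κ, and every member of E has cardinality κ. -/

import Mathlib

open Set

/-- A normal ultrafilter on the set of ordinals below `κ.ord`. -/
structure NormalUltrafilterOn (κ : Cardinal.{0}) where
  sets : Set (Set Ordinal)
  mem_subset : ∀ A ∈ sets, A ⊆ Set.Iio κ.ord
  univ_mem : Set.Iio κ.ord ∈ sets
  empty_not_mem : ∅ ∉ sets
  superset_mem : ∀ A B : Set Ordinal, A ∈ sets → A ⊆ B → B ⊆ Set.Iio κ.ord → B ∈ sets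
  ultra : ∀ A : Set Ordinal, A ⊆ Set.Iio κ.ord → A ∈ sets ∨ (Set.Iio κ.ord \ A) ∈ sets
  complete : ∀ S : Set (Set Ordinal), S ⊆ sets → S.Nonempty →
    Cardinal.mk S < Cardinal.lift.{1} κ → ⋂₀ S ∈ sets
  nonprincipal : ∀ α : Ordinal, (Set.Iio κ.ord \ {α}) ∈ sets
  normal : ∀ f : Ordinal → Ordinal, ∀ A ∈ sets, (∀ α ∈ A, f α < α) →
    ∃ B ∈ sets, ∃ γ : Ordinal, ∀ α ∈ B, f α = γ

/-- `Fseq A i α` is `F(i,α)`: the `α`-th element, in increasing order, of the set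
`A i \ ⋃ j < i, A j`. -/
noncomputable def Fseq (A : Ordinal → Set Ordinal) (i α : Ordinal) : Ordinal :=
  Ordinal.enumOrd (A i \ ⋃ j < i, A j) α

/-- `Sset A C` is `S_C = {F(i,α) : i < α and i, α ∈ C}`. -/
def Sset (A : Ordinal → Set Ordinal) (C : Set Ordinal) : Set Ordinal :=
  {β | ∃ i α, i ∈ C ∧ α ∈ C ∧ i < α ∧ Fseq A i α = β}

/-- `Eset κ D A` is `E = {Y ⊆ κ : there exists C ∈ D such that S_C ⊆ Y}`. -/
def Eset (κ : Cardinal.{0}) (D : NormalUltrafilterOn κ) (A : Ordinal → Set Ordinal) :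
    Set (Set Ordinal) :=
  {Y | Y ⊆ Set.Iio κ.ord ∧ ∃ C ∈ D.sets, Sset A C ⊆ Y}


section
variable {κ : Cardinal.{0}}
variable (D : NormalUltrafilterOn κ)

lemma aleph0_le_liftκ (hκ : Cardinal.aleph0 < κ) : Cardinal.aleph0 ≤ Cardinal.lift.{1} κ := by
  rw [← Cardinal.lift_aleph0.{1,0}]
  exact Cardinal.lift_le.mpr hκ.le

lemma inter_memD (hκ : Cardinal.aleph0 < κ) {X Y : Set Ordinal} (hX : X ∈ D.sets) (hY : Y ∈ D.sets) :
    X ∩ Y ∈ D.sets := by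
  have h := D.complete {X, Y} ?_ ⟨X, by simp⟩ ?_
  · rwa [Set.sInter_pair] at h
  · intro Z hZ; rcases hZ with rfl | rfl; exacts [hX, hY]
  · have h2 : Cardinal.mk ({X, Y} : Set (Set Ordinal)) ≤ 2 := by
      have h := Cardinal.mk_insert_le (s := ({Y} : Set (Set Ordinal))) (a := X)
      simp only [Cardinal.mk_singleton] at h
      exact h.trans_eq one_add_one_eq_two
    calc Cardinal.mk ({X, Y} : Set (Set Ordinal)) ≤ 2 := h2
      _ < Cardinal.aleph0 := Cardinal.nat_lt_aleph0 2
      _ ≤ Cardinal.lift.{1} κ := aleph0_le_liftκ hκ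

lemma compl_small_memD {X : Set Ordinal} (hX : X ⊆ Set.Iio κ.ord)
    (hXc : Cardinal.mk X < Cardinal.lift.{1} κ) : Set.Iio κ.ord \ X ∈ D.sets := by
  rcases X.eq_empty_or_nonempty with rfl | hne
  · simpa using D.univ_mem
  · have h := D.complete ((fun β => Set.Iio κ.ord \ {β}) '' X) ?_ (hne.image _) ?_
    · have he : ⋂₀ ((fun β => Set.Iio κ.ord \ {β}) '' X) = Set.Iio κ.ord \ X := by
        ext α
        simp only [Set.sInter_image, Set.mem_iInter, Set.mem_diff, Set.mem_Iio,
          Set.mem_singleton_iff]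
        obtain ⟨β₀, hβ₀⟩ := hne
        constructor
        · intro h'
          exact ⟨(h' β₀ hβ₀).1, fun hmem => ((h' α hmem).2 rfl)⟩
        · rintro ⟨h1, h2⟩ β hβ
          exact ⟨h1, fun he => h2 (he ▸ hβ)⟩
      rwa [he] at h
    · rintro Z ⟨β, _, rfl⟩; exact D.nonprincipal β
    · exact lt_of_le_of_lt (Cardinal.mk_image_le) hXc

lemma not_small_memD (hκ : Cardinal.aleph0 < κ) {X : Set Ordinal} (hX : X ∈ D.sets) :
    ¬ (Cardinal.mk X < Cardinal.lift.{1} κ) := by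
  intro hlt
  have h1 := compl_small_memD D (D.mem_subset X hX) hlt
  have h2 := inter_memD D hκ hX h1
  have : X ∩ (Set.Iio κ.ord \ X) = ∅ := by ext; simp +contextual [Set.mem_diff]
  rw [this] at h2
  exact D.empty_not_mem h2

lemma mk_Iio_ord : Cardinal.mk (Set.Iio κ.ord) = Cardinal.lift.{1} κ := by
  rw [Ordinal.mk_Iio_ordinal, Cardinal.card_ord]

lemma memD_card (hκ : Cardinal.aleph0 < κ) {X : Set Ordinal} (hX : X ∈ D.sets) :
    Cardinal.mk X = Cardinal.lift.{1} κ := by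
  refine le_antisymm ?_ (not_lt.mp (not_small_memD D hκ hX))
  rw [← mk_Iio_ord (κ := κ)]
  exact Cardinal.mk_le_mk_of_subset (D.mem_subset X hX)

end
section
variable {κ : Cardinal.{0}}

lemma regD (D : NormalUltrafilterOn κ) (hκ : Cardinal.aleph0 < κ) : κ.IsRegular := by
  refine ⟨hκ.le, ?_⟩
  by_contra hcof
  push_neg at hcof
  have hmem : Ordinal.cof κ.ord ∈
      { a : Cardinal | ∃ (ι : Type 0) (f : ι → Ordinal), Ordinal.lsub.{0,0} f = κ.ord ∧
        Cardinal.mk ι = a } := by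
    rw [Ordinal.cof_eq_sInf_lsub]
    exact csInf_mem (Ordinal.cof_lsub_def_nonempty κ.ord)
  obtain ⟨ι, f, hl, hmι⟩ := hmem
  have hlim : Order.IsSuccLimit (κ.ord) := Cardinal.isSuccLimit_ord hκ.le
  have hne : Nonempty ι := by
    have h0 : (0 : Ordinal) < Ordinal.lsub f := by
      rw [hl]; exact hlim.pos
    obtain ⟨i, -⟩ := Ordinal.lt_lsub_iff.mp h0
    exact ⟨i⟩
  set g : ι → Set Ordinal := fun i => Set.Iio κ.ord \ Set.Iio (f i + 1) with hg
  have hgD : ∀ i, g i ∈ D.sets := by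
    intro i
    apply compl_small_memD D
    · exact fun x hx => lt_of_lt_of_le hx (Order.succ_le_of_lt (hl ▸ Ordinal.lt_lsub f i))
    · rw [Ordinal.mk_Iio_ordinal]
      exact Cardinal.lift_lt.mpr (Cardinal.lt_ord.mp (hlim.succ_lt (hl ▸ Ordinal.lt_lsub f i)))
  have hSD := D.complete (Set.range g) (by rintro Z ⟨i, rfl⟩; exact hgD i) (Set.range_nonempty g) ?_
  · have hempty : ⋂₀ (Set.range g) = ∅ := by
      ext α
      simp only [Set.mem_sInter, Set.mem_range, forall_exists_index, Set.mem_empty_iff_false,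
        iff_false]
      intro h
      obtain i0 := hne.some
      have hα : α < κ.ord := (h _ i0 rfl).1
      obtain ⟨i, hi⟩ := Ordinal.lt_lsub_iff.mp (hl ▸ hα)
      have := (h _ i rfl).2
      simp only [Set.mem_Iio, not_lt] at this
      rw [Ordinal.add_one_eq_succ, Order.succ_le_iff] at this
      exact absurd hi (not_le.mpr this)
    rw [hempty] at hSD
    exact D.empty_not_mem hSD
  · have hr : Cardinal.mk (Set.range g) ≤ Cardinal.lift.{1} (Cardinal.mk ι) := by
      have h := Cardinal.mk_range_le_lift (f := g)
      simpa using h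
    calc Cardinal.mk (Set.range g) ≤ Cardinal.lift.{1} (Cardinal.mk ι) := hr
      _ < Cardinal.lift.{1} κ := Cardinal.lift_lt.mpr (hmι ▸ hcof)

lemma regD' (D : NormalUltrafilterOn κ) (hκ : Cardinal.aleph0 < κ) : (Cardinal.lift.{1} κ).IsRegular := by
  have hr := regD D hκ
  refine ⟨aleph0_le_liftκ hκ, ?_⟩
  rw [← Cardinal.lift_ord, ← Ordinal.lift_cof]
  exact Cardinal.lift_le.mpr hr.2

lemma biUnion_small (D : NormalUltrafilterOn κ) (hκ : Cardinal.aleph0 < κ) {i : Ordinal} (hi : i < κ.ord)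
    (t : Ordinal → Set Ordinal) (ht : ∀ j < i, Cardinal.mk (t j) < Cardinal.lift.{1} κ) :
    Cardinal.mk ↥(⋃ j < i, t j) < Cardinal.lift.{1} κ := by
  have he : (⋃ j < i, t j) = ⋃ (j : Set.Iio i), t j := by
    simp [Set.biUnion_eq_iUnion]
  rw [he]
  have hii : Cardinal.mk (Set.Iio i) < Cardinal.lift.{1} κ := by
    rw [Ordinal.mk_Iio_ordinal]
    exact Cardinal.lift_lt.mpr (Cardinal.lt_ord.mp hi)
  calc Cardinal.mk ↥(⋃ (j : Set.Iio i), t j)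
      ≤ Cardinal.mk (Set.Iio i) * ⨆ (j : Set.Iio i), Cardinal.mk (t j) :=
        Cardinal.mk_iUnion_le _
    _ < Cardinal.lift.{1} κ := by
        apply Cardinal.mul_lt_of_lt (aleph0_le_liftκ hκ) hii
        exact Cardinal.iSup_lt_of_isRegular (regD' D hκ) hii fun j => ht j j.2

end
section
variable {κ : Cardinal.{0}}

theorem Ordinal.enumOrd_def (s : Set Ordinal.{0}) (o : Ordinal.{0}) :
    Ordinal.enumOrd s o = sInf (s ∩ { b | ∀ c, c < o → Ordinal.enumOrd s c < b }) := by
  rw [Ordinal.enumOrd]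

set_option linter.deprecated false in
lemma enumOrd_lt_ord (hκ : Cardinal.aleph0 < κ) {s : Set Ordinal} (hs : s ⊆ Set.Iio κ.ord)
    (c : Ordinal) : Ordinal.enumOrd s c < κ.ord := by
  rw [Ordinal.enumOrd_def]
  rcases (s ∩ { b | ∀ c' , c' < c → Ordinal.enumOrd s c' < b }).eq_empty_or_nonempty with he | hne
  · rw [he, Ordinal.sInf_empty]
    exact (Cardinal.isSuccLimit_ord hκ.le).pos
  · exact hs (csInf_mem hne).1

set_option linter.deprecated false in
lemma enum_main (D : NormalUltrafilterOn κ) (hκ : Cardinal.aleph0 < κ) {s : Set Ordinal}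
    (hs : s ⊆ Set.Iio κ.ord) (hcard : Cardinal.mk s = Cardinal.lift.{1} κ)
    {α : Ordinal} (hα : α < κ.ord) :
    Ordinal.enumOrd s α ∈ s ∧ ∀ β < α, Ordinal.enumOrd s β < Ordinal.enumOrd s α := by
  have hlim : Order.IsSuccLimit (κ.ord) := Cardinal.isSuccLimit_ord hκ.le
  have hW : Cardinal.mk ↥(⋃ c < α, Set.Iic (Ordinal.enumOrd s c)) < Cardinal.lift.{1} κ := by
    apply biUnion_small D hκ hα
    intro c _
    have h1 : Set.Iic (Ordinal.enumOrd s c) = Set.Iio (Ordinal.enumOrd s c + 1) := by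
      ext; simp [Order.lt_add_one_iff]
    rw [h1, Ordinal.mk_Iio_ordinal]
    refine Cardinal.lift_lt.mpr (Cardinal.lt_ord.mp ?_)
    rw [Ordinal.add_one_eq_succ]
    exact hlim.succ_lt (enumOrd_lt_ord hκ hs c)
  have hbne : (s \ ⋃ c < α, Set.Iic (Ordinal.enumOrd s c)).Nonempty := by
    rw [Set.diff_nonempty]
    intro hsub
    exact absurd (hcard ▸ Cardinal.mk_le_mk_of_subset hsub) (not_le.mpr hW)
  obtain ⟨b, hbs, hbW⟩ := hbne
  have hbT : b ∈ s ∩ { b | ∀ c, c < α → Ordinal.enumOrd s c < b } := by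
    refine ⟨hbs, fun c hc => ?_⟩
    by_contra hle
    exact hbW (Set.mem_biUnion hc (not_lt.mp hle))
  have hmem := csInf_mem ⟨b, hbT⟩
  rw [← Ordinal.enumOrd_def] at hmem
  exact ⟨hmem.1, fun β hβ => hmem.2 β hβ⟩

end
section
variable {κ : Cardinal.{0}}

lemma D_nonempty_of_mem (D : NormalUltrafilterOn κ) {X : Set Ordinal} (hX : X ∈ D.sets) : X.Nonempty := by
  rcases X.eq_empty_or_nonempty with rfl | h
  · exact absurd hX D.empty_not_mem
  · exact h

lemma diagD (D : NormalUltrafilterOn κ) (hκ : Cardinal.aleph0 < κ) (g : Ordinal → Set Ordinal) (hg : ∀ i < κ.ord, g i ∈ D.sets) :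
    {α | α < κ.ord ∧ ∀ i < α, α ∈ g i} ∈ D.sets := by
  classical
  set Δ := {α | α < κ.ord ∧ ∀ i < α, α ∈ g i} with hΔ
  have hΔsub : Δ ⊆ Set.Iio κ.ord := fun α hα => hα.1
  rcases D.ultra Δ hΔsub with h | h
  · exact h
  exfalso
  set f : Ordinal → Ordinal := fun α =>
    if hex : ∃ i, i < α ∧ α ∉ g i then hex.choose else 0 with hf
  have hkey : ∀ α ∈ Set.Iio κ.ord \ Δ, f α < α ∧ α ∉ g (f α) := by
    intro α hα
    have hex : ∃ i, i < α ∧ α ∉ g i := by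
      have := hα.2
      rw [hΔ] at this
      simp only [Set.mem_setOf_eq, not_and, not_forall] at this
      obtain ⟨i, hi, hgi⟩ := this hα.1
      exact ⟨i, hi, hgi⟩
    rw [hf]
    simp only [dif_pos hex]
    exact ⟨hex.choose_spec.1, hex.choose_spec.2⟩
  obtain ⟨B, hB, γ, hγ⟩ := D.normal f (Set.Iio κ.ord \ Δ) h (fun α hα => (hkey α hα).1)
  have hκ' : Cardinal.aleph0 < κ := hκ
  have hB' : B ∩ (Set.Iio κ.ord \ Δ) ∈ D.sets := inter_memD D hκ' hB h
  obtain ⟨α₀, hα₀⟩ := D_nonempty_of_mem D hB'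
  have hγα₀ : γ < α₀ := hγ α₀ hα₀.1 ▸ (hkey α₀ hα₀.2).1
  have hγord : γ < κ.ord := hγα₀.trans hα₀.2.1
  have hZ : B ∩ (Set.Iio κ.ord \ Δ) ∩ g γ ∈ D.sets := inter_memD D hκ' hB' (hg γ hγord)
  have hZe : B ∩ (Set.Iio κ.ord \ Δ) ∩ g γ = ∅ := by
    ext α
    simp only [Set.mem_inter_iff, Set.mem_empty_iff_false, iff_false, not_and]
    intro hαB hαg
    have := (hkey α hαB.2).2
    rw [hγ α hαB.1] at this
    exact this hαg
  rw [hZe] at hZ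
  exact D.empty_not_mem hZ

end

theorem stmt9 (κ : Cardinal.{0}) (hκ : Cardinal.aleph0 < κ) (D : NormalUltrafilterOn κ)
    -- `Bfam` is a κ-almost disjoint family on κ:
    (Bfam : Set (Set Ordinal))
    (hBsub : ∀ C ∈ Bfam, C ⊆ Set.Iio κ.ord)
    (hBcard : ∀ C ∈ Bfam, Cardinal.mk C = Cardinal.lift.{1} κ)
    (hBad : ∀ C ∈ Bfam, ∀ C' ∈ Bfam, C ≠ C' →
      Cardinal.mk ↥(C ∩ C') < Cardinal.lift.{1} κ)
    -- `(A i : i < κ)` is a sequence of pairwise distinct members of `Bfam`: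
    (A : Ordinal → Set Ordinal) (hA : ∀ i < κ.ord, A i ∈ Bfam)
    (hAinj : ∀ i < κ.ord, ∀ j < κ.ord, i ≠ j → A i ≠ A j)
    :
    -- `E` is a κ-complete nonprincipal ultrafilter on κ all of whose members
    -- have cardinality κ:
    (∅ ∉ Eset κ D A) ∧
    (∀ Y Z : Set Ordinal, Y ∈ Eset κ D A → Y ⊆ Z → Z ⊆ Set.Iio κ.ord →
      Z ∈ Eset κ D A) ∧
    (∀ Y : Set Ordinal, Y ⊆ Set.Iio κ.ord →
      Y ∈ Eset κ D A ∨ (Set.Iio κ.ord \ Y) ∈ Eset κ D A) ∧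
    (∀ T : Set (Set Ordinal), T ⊆ Eset κ D A → T.Nonempty →
      Cardinal.mk T < Cardinal.lift.{1} κ → ⋂₀ T ∈ Eset κ D A) ∧
    (∀ β : Ordinal, (Set.Iio κ.ord \ {β}) ∈ Eset κ D A) ∧
    (∀ Y ∈ Eset κ D A, Cardinal.mk Y = Cardinal.lift.{1} κ) := by
  classical
  have hlim : Order.IsSuccLimit (κ.ord) := Cardinal.isSuccLimit_ord hκ.le
  -- the sets `A i \ ⋃ j < i, A j` have cardinality κ
  have hsetcard : ∀ i < κ.ord, Cardinal.mk ↥(A i \ ⋃ j < i, A j) = Cardinal.lift.{1} κ := by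
    intro i hi
    have hBi := hA i hi
    have hV : Cardinal.mk ↥(⋃ j < i, (A i ∩ A j)) < Cardinal.lift.{1} κ := by
      apply biUnion_small D hκ hi
      intro j hj
      exact hBad (A i) hBi (A j) (hA j (hj.trans hi)) (hAinj i hi j (hj.trans hi) (ne_of_gt hj))
    refine le_antisymm ?_ ?_
    · rw [← mk_Iio_ord (κ := κ)]
      exact Cardinal.mk_le_mk_of_subset fun x hx => hBsub _ hBi hx.1
    · by_contra hlt
      push_neg at hlt
      have hsub : A i ⊆ (A i \ ⋃ j < i, A j) ∪ ⋃ j < i, (A i ∩ A j) := by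
        intro x hx
        by_cases hxU : x ∈ ⋃ j < i, A j
        · right
          simp only [Set.mem_iUnion] at hxU ⊢
          obtain ⟨j, hj, hxj⟩ := hxU
          exact ⟨j, hj, hx, hxj⟩
        · left; exact ⟨hx, hxU⟩
      have hle := (Cardinal.mk_le_mk_of_subset hsub).trans (Cardinal.mk_union_le _ _)
      rw [hBcard (A i) hBi] at hle
      exact absurd hle (not_le.mpr (Cardinal.add_lt_of_lt (aleph0_le_liftκ hκ) hlt hV))
  have hFmem : ∀ i < κ.ord, ∀ α < κ.ord, Fseq A i α ∈ A i \ ⋃ j < i, A j ∧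
      ∀ β < α, Fseq A i β < Fseq A i α := by
    intro i hi α hα
    exact enum_main D hκ (fun x hx => hBsub _ (hA i hi) hx.1) (hsetcard i hi) hα
  have hFIio : ∀ i < κ.ord, ∀ α < κ.ord, Fseq A i α < κ.ord :=
    fun i hi α hα => hBsub _ (hA i hi) (hFmem i hi α hα).1.1
  have hFinj : ∀ i < κ.ord, ∀ α < κ.ord, ∀ α' < κ.ord, α ≠ α' → Fseq A i α ≠ Fseq A i α' := by
    intro i hi α hα α' hα' hne
    rcases hne.lt_or_gt with h | h
    · exact ne_of_lt ((hFmem i hi α' hα').2 α h)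
    · exact (ne_of_lt ((hFmem i hi α hα).2 α' h)).symm
  have hSmono : ∀ C C' : Set Ordinal, C ⊆ C' → Sset A C ⊆ Sset A C' := by
    rintro C C' h β ⟨i, α, hi, hα, hlt, rfl⟩
    exact ⟨i, α, h hi, h hα, hlt, rfl⟩
  -- each S_C has cardinality at least κ
  have hScard : ∀ C ∈ D.sets, Cardinal.lift.{1} κ ≤ Cardinal.mk (Sset A C) := by
    intro C hC
    obtain ⟨i, hiC⟩ := D_nonempty_of_mem D hC
    have hi : i < κ.ord := D.mem_subset C hC hiC
    have hisucc : i + 1 < κ.ord := by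
      rw [Ordinal.add_one_eq_succ]; exact hlim.succ_lt hi
    have hsmall : Cardinal.mk ↥(Set.Iio (i + 1)) < Cardinal.lift.{1} κ := by
      rw [Ordinal.mk_Iio_ordinal]
      exact Cardinal.lift_lt.mpr (Cardinal.lt_ord.mp hisucc)
    have hC' : C ∩ (Set.Iio κ.ord \ Set.Iio (i + 1)) ∈ D.sets :=
      inter_memD D hκ hC
        (compl_small_memD D (fun x hx => lt_trans hx hisucc) hsmall)
    have hC'card := memD_card D hκ hC'
    have hinj : Set.InjOn (fun α => Fseq A i α) (C ∩ (Set.Iio κ.ord \ Set.Iio (i + 1))) := by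
      intro α hα α' hα' he
      by_contra hne
      exact hFinj i hi α hα.2.1 α' hα'.2.1 hne he
    have himg := Cardinal.mk_image_eq_of_injOn _ _ hinj
    have hsub : (fun α => Fseq A i α) '' (C ∩ (Set.Iio κ.ord \ Set.Iio (i + 1))) ⊆ Sset A C := by
      rintro β ⟨α, hα, rfl⟩
      have hiα : i < α := by
        have h2 := hα.2.2
        simp only [Set.mem_Iio, not_lt] at h2
        rw [Ordinal.add_one_eq_succ, Order.succ_le_iff] at h2
        exact h2
      exact ⟨i, α, hiC, hα.1, hiα, rfl⟩
    calc Cardinal.lift.{1} κ = Cardinal.mk ↥(C ∩ (Set.Iio κ.ord \ Set.Iio (i + 1))) :=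
          hC'card.symm
      _ = Cardinal.mk ↥((fun α => Fseq A i α) '' (C ∩ (Set.Iio κ.ord \ Set.Iio (i + 1)))) :=
          himg.symm
      _ ≤ Cardinal.mk (Sset A C) := Cardinal.mk_le_mk_of_subset hsub
  -- every member of E has cardinality κ
  have hEcard : ∀ Y ∈ Eset κ D A, Cardinal.mk Y = Cardinal.lift.{1} κ := by
    rintro Y ⟨hYsub, C, hC, hSC⟩
    refine le_antisymm ?_ ((hScard C hC).trans (Cardinal.mk_le_mk_of_subset hSC))
    rw [← mk_Iio_ord (κ := κ)]
    exact Cardinal.mk_le_mk_of_subset hYsub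
  -- E is an ultrafilter
  have hUltra : ∀ Y : Set Ordinal, Y ⊆ Set.Iio κ.ord →
      Y ∈ Eset κ D A ∨ (Set.Iio κ.ord \ Y) ∈ Eset κ D A := by
    intro Y hY
    set Yi : Ordinal → Set Ordinal := fun i => {α | α < κ.ord ∧ Fseq A i α ∈ Y} with hYidef
    have hYisub : ∀ i, Yi i ⊆ Set.Iio κ.ord := fun i α hα => hα.1
    by_cases hH : {i | i < κ.ord ∧ Yi i ∈ D.sets} ∈ D.sets
    · left
      set g : Ordinal → Set Ordinal :=
        fun i => if Yi i ∈ D.sets then Yi i else Set.Iio κ.ord with hg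
      have hgD : ∀ i < κ.ord, g i ∈ D.sets := by
        intro i _
        rw [hg]; dsimp only
        split
        · assumption
        · exact D.univ_mem
      have hΔ := diagD D hκ g hgD
      refine ⟨hY, {i | i < κ.ord ∧ Yi i ∈ D.sets} ∩ {α | α < κ.ord ∧ ∀ i < α, α ∈ g i},
        inter_memD D hκ hH hΔ, ?_⟩
      rintro β ⟨i, α, hi, hα, hiα, rfl⟩
      have hαg : α ∈ g i := hα.2.2 i hiα
      rw [hg] at hαg; dsimp only at hαg
      rw [if_pos hi.1.2] at hαg
      exact hαg.2
    · right
      have hH1 : Set.Iio κ.ord \ {i | i < κ.ord ∧ Yi i ∈ D.sets} ∈ D.sets := by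
        rcases D.ultra {i | i < κ.ord ∧ Yi i ∈ D.sets} (fun i hi => hi.1) with h | h
        · exact absurd h hH
        · exact h
      set g : Ordinal → Set Ordinal :=
        fun i => if Yi i ∈ D.sets then Set.Iio κ.ord else Set.Iio κ.ord \ Yi i with hg
      have hgD : ∀ i < κ.ord, g i ∈ D.sets := by
        intro i hi
        rw [hg]; dsimp only
        split
        · exact D.univ_mem
        · rcases D.ultra (Yi i) (hYisub i) with h' | h'
          · exact absurd h' (by assumption)
          · exact h'
      have hΔ := diagD D hκ g hgD
      refine ⟨fun x hx => hx.1,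
        (Set.Iio κ.ord \ {i | i < κ.ord ∧ Yi i ∈ D.sets}) ∩
          {α | α < κ.ord ∧ ∀ i < α, α ∈ g i},
        inter_memD D hκ hH1 hΔ, ?_⟩
      rintro β ⟨i, α, hi, hα, hiα, rfl⟩
      have hiord : i < κ.ord := hi.1.1
      have hαord : α < κ.ord := hα.2.1
      have hYiD : Yi i ∉ D.sets := fun hmem => hi.1.2 ⟨hiord, hmem⟩
      have hαg : α ∈ g i := hα.2.2 i hiα
      rw [hg] at hαg; dsimp only at hαg
      rw [if_neg hYiD] at hαg
      refine ⟨hFIio i hiord α hαord, fun hFY => ?_⟩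
      exact hαg.2 ⟨hαord, hFY⟩
  -- E is κ-complete
  have hComplete : ∀ T : Set (Set Ordinal), T ⊆ Eset κ D A → T.Nonempty →
      Cardinal.mk T < Cardinal.lift.{1} κ → ⋂₀ T ∈ Eset κ D A := by
    intro T hT hTne hTcard
    have hch : ∀ Y : T, ∃ C, C ∈ D.sets ∧ Sset A C ⊆ (Y : Set Ordinal) := by
      intro Y
      obtain ⟨_, C, hC, hS⟩ := hT Y.2
      exact ⟨C, hC, hS⟩
    choose C' hC1 hC2 using hch
    haveI : Nonempty ↥T := hTne.to_subtype
    have hS : ⋂₀ (Set.range C') ∈ D.sets := by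
      apply D.complete
      · rintro Z ⟨Y, rfl⟩; exact hC1 Y
      · exact Set.range_nonempty C'
      · exact (Cardinal.mk_range_le).trans_lt hTcard
    refine ⟨?_, ⋂₀ (Set.range C'), hS, ?_⟩
    · obtain ⟨Y₀, hY₀⟩ := hTne
      exact (Set.sInter_subset_of_mem hY₀).trans (hT hY₀).1
    · intro β hβ
      rw [Set.mem_sInter]
      intro Y hY
      exact hC2 ⟨Y, hY⟩ (hSmono _ _ (Set.sInter_subset_of_mem (Set.mem_range_self (⟨Y, hY⟩ : ↥T))) hβ)
  -- ∅ ∉ E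
  have hEmpty : ∅ ∉ Eset κ D A := by
    intro h
    have h0 := hEcard ∅ h
    rw [Cardinal.mk_emptyCollection] at h0
    exact absurd h0.symm
      (ne_of_gt (lt_of_lt_of_le Cardinal.aleph0_pos (aleph0_le_liftκ hκ)))
  -- upward closure
  have hSuper : ∀ Y Z : Set Ordinal, Y ∈ Eset κ D A → Y ⊆ Z → Z ⊆ Set.Iio κ.ord →
      Z ∈ Eset κ D A := by
    rintro Y Z ⟨hY, C, hC, hS⟩ hYZ hZ
    exact ⟨hZ, C, hC, hS.trans hYZ⟩
  -- nonprincipality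
  have hNP : ∀ β : Ordinal, (Set.Iio κ.ord \ {β}) ∈ Eset κ D A := by
    intro β
    rcases hUltra ({β} ∩ Set.Iio κ.ord) Set.inter_subset_right with h | h
    · exfalso
      have hcard := hEcard _ h
      have hle : Cardinal.mk ↥({β} ∩ Set.Iio κ.ord) ≤ 1 := by
        calc Cardinal.mk ↥({β} ∩ Set.Iio κ.ord) ≤ Cardinal.mk ↥({β} : Set Ordinal) :=
              Cardinal.mk_le_mk_of_subset Set.inter_subset_left
          _ = 1 := Cardinal.mk_singleton β
      rw [hcard] at hle
      exact absurd hle (not_le.mpr (lt_of_lt_of_le Cardinal.one_lt_aleph0 (aleph0_le_liftκ hκ)))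
    · have heq : Set.Iio κ.ord \ ({β} ∩ Set.Iio κ.ord) = Set.Iio κ.ord \ {β} := by
        ext x
        simp only [Set.mem_diff, Set.mem_inter_iff, Set.mem_singleton_iff, Set.mem_Iio]
        tauto
      rwa [heq] at h
  exact ⟨hEmpty, hSuper, hUltra, hComplete, hNP, hEcard⟩
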